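/- Let γ_k, γ_{k+1}, a_{k+1}, A_k > 0 with A_{k+1} = A_k + a_{k+1}, and let x_k, v_k, x_{k+1} ∈ ℝⁿ. Define y_{k+1} = (A_k γ_{k+1} x_k + a_{k+1} γ_k v_k)/(A_k γ_{k+1} + a_{k+1} γ_k), and suppose γ_{k+1} v_{k+1} = γ_k v_k + a_{k+1}(L+μ_Ψ)x_{k+1} − a_{k+1}(L−μ_f) y_{k+1}, with (L+μ_Ψ)a_{k+1}² = A_{k+1}γ_{k+1} and γ_{k+1} = γ_k + (μ_f+μ_Ψ)a_{k+1}. Then v_{k+1} = x_k + (A_{k+1}/a_{k+1})(x_{k+1} − x_k). -/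

import Mathlib

theorem acgm_vertex_extrapolation {n : ℕ}
    (γk γk1 ak1 Ak Ak1 L μf μΨ : ℝ)
    (hγk : 0 < γk) (hγk1 : 0 < γk1) (hak1 : 0 < ak1) (hAk : 0 < Ak)
    (hL : 0 < L) (hμf : 0 ≤ μf) (hμΨ : 0 ≤ μΨ)
    (hAacc : Ak1 = Ak + ak1)
    (xk vk xk1 yk1 vk1 : EuclideanSpace ℝ (Fin n))
    (hy : yk1 = (Ak * γk1 + ak1 * γk)⁻¹ • ((Ak * γk1) • xk + (ak1 * γk) • vk))
    (hv : γk1 • vk1 = γk • vk + (ak1 * (L + μΨ)) • xk1 - (ak1 * (L - μf)) • yk1)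
    (hstep : (L + μΨ) * ak1 ^ 2 = Ak1 * γk1)
    (hγrec : γk1 = γk + (μf + μΨ) * ak1) :
    vk1 = xk + (Ak1 / ak1) • (xk1 - xk) := by
  have hD2 : Ak * γk1 + ak1 * γk = ak1 ^ 2 * (L - μf) := by
    linear_combination -hstep - ak1 * hγrec - γk1 * hAacc
  have hDpos : 0 < Ak * γk1 + ak1 * γk := by positivity
  have hLμ : 0 < L - μf := by
    nlinarith [sq_nonneg ak1]
  apply smul_right_injective (EuclideanSpace ℝ (Fin n)) hγk1.ne'
  show γk1 • vk1 = γk1 • (xk + (Ak1 / ak1) • (xk1 - xk))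
  rw [hv, hy]
  match_scalars
  · -- coefficient of vk / xk etc.
    field_simp
    nlinarith [hD2, hstep, hγrec, hAacc]
  · field_simp
    nlinarith [hD2, hstep, hγrec, hAacc]
  · field_simp
    linear_combination Ak * hD2 + (ak1*γk + Ak*γk1) * hAacc
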